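/- (Proposition 1, structure of the optimum, well-definedness) Let N ≥ 2, 1/N = p_l < p_h < 1, integers 1 ≤ t < T, and suppose the linear program is feasible, i.e., ((T−t)/T)·Σ_{k ≤ k₀} [τ_d·μ(k;t) − τ_c·λ(k;t)] ≥ τ_d − τ_c where k₀ = max{k : τ_d·μ(k;t) − τ_c·λ(k;t) > 0}. Define k̄ = min{k′ : ((T−t)/T)·Σ_{k ≤ k′} [τ_d·μ(k;t) − τ_c·λ(k;t)] ≥ τ_d − τ_c}. Then k̄ exists, 0 ≤ k̄ ≤ k₀, and the rule f* defined by f*(k) = 1 for k < k̄, f*(k) = 0 for k > k̄, and f*(k̄) = [ (T/(T−t))·(τ_d − τ_c) − Σ_{k=0}^{k̄−1} (τ_d·μ(k;t) − τ_c·λ(k;t)) ] / (τ_d·μ(k̄;t) − τ_c·λ(k̄;t)) satisfies 0 ≤ f*(k̄) ≤ 1 and satisfies the incentive constraint with equality: ((T−t)/T)·Σ_{k=0}^t [τ_d μ(k;t) − τ_c λ(k;t)] f*(k) = τ_d − τ_c. In particular f* is a feasible intervention rule. -/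

import Mathlib

open Finset

/-- `lam N t pl k` is the probability of `k` idle signals out of `t` when all `N`
users transmit with probability `pl`. -/
noncomputable def lam (N t : ℕ) (pl : ℝ) (k : ℕ) : ℝ :=
  (t.choose k : ℝ) * ((1 - pl) ^ N) ^ k * (1 - (1 - pl) ^ N) ^ (t - k)

/-- `mu N t pl ph k` is the probability of `k` idle signals out of `t` when exactly
one user transmits with probability `ph` and the others with `pl`. -/
noncomputable def mu (N t : ℕ) (pl ph : ℝ) (k : ℕ) : ℝ :=
  (t.choose k : ℝ) * ((1 - pl) ^ (N - 1) * (1 - ph)) ^ k *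
    (1 - (1 - pl) ^ (N - 1) * (1 - ph)) ^ (t - k)

/-- The cooperation throughput `τ_c = pl (1 - pl)^{N-1}`. -/
noncomputable def tauC (N : ℕ) (pl : ℝ) : ℝ := pl * (1 - pl) ^ (N - 1)

/-- The defection throughput `τ_d = ph (1 - pl)^{N-1}`. -/
noncomputable def tauD (N : ℕ) (pl ph : ℝ) : ℝ := ph * (1 - pl) ^ (N - 1)

/-- `f : {0,…,t} → [0,1]` is an intervention rule. -/
def IsRule (t : ℕ) (f : ℕ → ℝ) : Prop := ∀ k ≤ t, 0 ≤ f k ∧ f k ≤ 1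

/-- The left-hand side of the incentive constraint:
`((T−t)/T) · Σ_{k=0}^t [τ_d μ(k;t) − τ_c λ(k;t)] f(k)`. -/
noncomputable def incLHS (N t T : ℕ) (pl ph : ℝ) (f : ℕ → ℝ) : ℝ :=
  (((T : ℝ) - t) / T) * ∑ k ∈ Finset.range (t + 1),
    (tauD N pl ph * mu N t pl ph k - tauC N pl * lam N t pl k) * f k

/-- A feasible solution of the linear program: an intervention rule satisfying the
incentive constraint. -/
def Feasible (N t T : ℕ) (pl ph : ℝ) (f : ℕ → ℝ) : Prop :=
  IsRule t f ∧ incLHS N t T pl ph f ≥ tauD N pl ph - tauC N pl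

/-- The objective of the linear program: the expected transmission probability of the
intervention device under cooperation, `Σ_{k=0}^t λ(k;t) f(k)`. -/
noncomputable def objective (N t : ℕ) (pl : ℝ) (f : ℕ → ℝ) : ℝ :=
  ∑ k ∈ Finset.range (t + 1), lam N t pl k * f k

/-- The threshold intervention rule of Proposition 1: `f*(k) = 1` for `k < k̄`,
`f*(k) = 0` for `k > k̄`, and at `k = k̄` the value making the incentive constraint
bind. -/
noncomputable def thresholdRule (N t T : ℕ) (pl ph : ℝ) (kbar : ℕ) : ℕ → ℝ :=
  fun k =>
    if k < kbar then 1
    else if k = kbar then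
      ((T : ℝ) / ((T : ℝ) - t) * (tauD N pl ph - tauC N pl) -
          ∑ j ∈ Finset.range kbar,
            (tauD N pl ph * mu N t pl ph j - tauC N pl * lam N t pl j)) /
        (tauD N pl ph * mu N t pl ph kbar - tauC N pl * lam N t pl kbar)
    else 0

/-- (Proposition 1, structure of the optimum, well-definedness) If the linear program
is feasible, then `k̄ = min{k' : ((T−t)/T)·Σ_{k ≤ k'} [τ_d μ(k;t) − τ_c λ(k;t)] ≥ τ_d − τ_c}`
exists, `k̄ ≤ k₀`, the value `f*(k̄)` of the threshold rule lies in `[0,1]`, and `f*`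
satisfies the incentive constraint with equality; in particular `f*` is feasible. -/
private lemma aux_step (pl ph a b : ℝ) (k s : ℕ) (hpl : 0 < pl) (hph : 0 < ph)
    (ha : 0 < a) (hab : a ≤ b) (hb1 : b < 1)
    (h : pl * b ^ (k+1) * (1-b) ^ s < ph * a ^ (k+1) * (1-a) ^ s) :
    pl * b ^ k * (1-b) ^ (s+1) < ph * a ^ k * (1-a) ^ (s+1) := by
  have hb : 0 < b := lt_of_lt_of_le ha hab
  have ha1 : 0 < 1 - a := by linarith
  have hb1' : 0 < 1 - b := by linarith
  have key : a * (1-b) ≤ b * (1-a) := by nlinarith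
  have hab2 : 0 < a * b := mul_pos ha hb
  have calc1 : a * b * (pl * b ^ k * (1-b) ^ (s+1)) <
      a * b * (ph * a ^ k * (1-a) ^ (s+1)) := by
    calc a * b * (pl * b ^ k * (1-b) ^ (s+1))
        = a * (1-b) * (pl * b ^ (k+1) * (1-b) ^ s) := by ring
      _ < a * (1-b) * (ph * a ^ (k+1) * (1-a) ^ s) :=
          mul_lt_mul_of_pos_left h (by positivity)
      _ ≤ b * (1-a) * (ph * a ^ (k+1) * (1-a) ^ s) :=
          mul_le_mul_of_nonneg_right key (by positivity)
      _ = a * b * (ph * a ^ k * (1-a) ^ (s+1)) := by ring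
  exact (mul_lt_mul_iff_right₀ hab2).mp calc1

private lemma g_factor (N t : ℕ) (pl ph : ℝ) (hN : 1 ≤ N) (k : ℕ) :
    tauD N pl ph * mu N t pl ph k - tauC N pl * lam N t pl k
    = (1-pl)^(N-1) * (t.choose k : ℝ) *
      (ph * ((1-pl)^(N-1)*(1-ph))^k * (1 - (1-pl)^(N-1)*(1-ph))^(t-k)
       - pl * ((1-pl)^(N-1)*(1-pl))^k * (1 - (1-pl)^(N-1)*(1-pl))^(t-k)) := by
  have hNe : (1-pl)^N = (1-pl)^(N-1) * (1-pl) := by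
    rw [← pow_succ]; congr 1; omega
  unfold tauD tauC mu lam
  rw [hNe]; ring

private lemma abstract_main (g : ℕ → ℝ) (c tgt : ℝ) (t k0 : ℕ)
    (hc : 0 < c) (htgt : 0 < tgt) (hk0t : k0 ≤ t)
    (hgpos : ∀ k ≤ k0, 0 < g k)
    (hfeas : c * ∑ k ∈ Finset.range (k0+1), g k ≥ tgt) :
    ∃ kbar ≤ k0,
      (c * ∑ k ∈ Finset.range (kbar+1), g k ≥ tgt) ∧
      (∀ k' < kbar, c * ∑ k ∈ Finset.range (k'+1), g k < tgt) ∧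
      0 ≤ (tgt / c - ∑ j ∈ Finset.range kbar, g j) / g kbar ∧
      (tgt / c - ∑ j ∈ Finset.range kbar, g j) / g kbar ≤ 1 ∧
      c * ((∑ j ∈ Finset.range kbar, g j) +
        g kbar * ((tgt / c - ∑ j ∈ Finset.range kbar, g j) / g kbar)) = tgt := by
  classical
  have hex : ∃ k', c * ∑ k ∈ Finset.range (k'+1), g k ≥ tgt := ⟨k0, hfeas⟩
  set kbar := Nat.find hex with hkb
  have hP : c * ∑ k ∈ Finset.range (kbar+1), g k ≥ tgt := Nat.find_spec hex
  have hkle : kbar ≤ k0 := Nat.find_min' hex hfeas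
  have hmin : ∀ k' < kbar, c * ∑ k ∈ Finset.range (k'+1), g k < tgt := by
    intro k' hk'
    have := Nat.find_min hex hk'
    push_neg at this
    exact this
  have hgk : 0 < g kbar := hgpos kbar hkle
  have hS_lt : ∑ j ∈ Finset.range kbar, g j < tgt / c := by
    rcases Nat.eq_zero_or_pos kbar with h0 | hpos
    · rw [h0]; simp; positivity
    · obtain ⟨m, hm⟩ := Nat.exists_eq_succ_of_ne_zero (Nat.pos_iff_ne_zero.mp hpos)
      have h1 := hmin m (by omega)
      rw [hm]
      rw [lt_div_iff₀ hc]
      calc (∑ k ∈ Finset.range (m+1), g k) * c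
          = c * ∑ k ∈ Finset.range (m+1), g k := by ring
        _ < tgt := h1
  have hS_le : tgt / c ≤ (∑ j ∈ Finset.range kbar, g j) + g kbar := by
    rw [div_le_iff₀ hc]
    have h2 : ∑ k ∈ Finset.range (kbar+1), g k
        = (∑ j ∈ Finset.range kbar, g j) + g kbar := Finset.sum_range_succ g kbar
    rw [h2] at hP
    linarith [hP]
  refine ⟨kbar, hkle, hP, hmin, ?_, ?_, ?_⟩
  · exact div_nonneg (by linarith) hgk.le
  · rw [div_le_one hgk]; linarith
  · have h3 : g kbar * ((tgt / c - ∑ j ∈ Finset.range kbar, g j) / g kbar)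
        = tgt / c - ∑ j ∈ Finset.range kbar, g j := by
      field_simp
    rw [h3]
    field_simp
    ring

theorem threshold_rule_well_defined (N t T : ℕ) (pl ph : ℝ) (hN : 2 ≤ N)
    (hpl : pl = 1 / N) (hlh : pl < ph) (hph : ph < 1) (ht : 1 ≤ t) (htT : t < T)
    (k0 : ℕ) (hk0t : k0 ≤ t)
    (hk0pos : 0 < tauD N pl ph * mu N t pl ph k0 - tauC N pl * lam N t pl k0)
    (hk0max : ∀ k ≤ t,
      0 < tauD N pl ph * mu N t pl ph k - tauC N pl * lam N t pl k → k ≤ k0)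
    (hfeasLP : (((T : ℝ) - t) / T) * ∑ k ∈ Finset.range (k0 + 1),
        (tauD N pl ph * mu N t pl ph k - tauC N pl * lam N t pl k)
      ≥ tauD N pl ph - tauC N pl) :
    ∃ kbar ≤ k0,
      ((((T : ℝ) - t) / T) * ∑ k ∈ Finset.range (kbar + 1),
          (tauD N pl ph * mu N t pl ph k - tauC N pl * lam N t pl k)
        ≥ tauD N pl ph - tauC N pl) ∧
      (∀ k' < kbar, (((T : ℝ) - t) / T) * ∑ k ∈ Finset.range (k' + 1),
          (tauD N pl ph * mu N t pl ph k - tauC N pl * lam N t pl k)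
        < tauD N pl ph - tauC N pl) ∧
      0 ≤ thresholdRule N t T pl ph kbar kbar ∧
      thresholdRule N t T pl ph kbar kbar ≤ 1 ∧
      incLHS N t T pl ph (thresholdRule N t T pl ph kbar) =
        tauD N pl ph - tauC N pl ∧
      Feasible N t T pl ph (thresholdRule N t T pl ph kbar) := by
  classical
  have hN0 : (0:ℕ) < N := by omega
  have hpl0 : 0 < pl := by
    rw [hpl]
    have h1 : (0:ℝ) < N := by exact_mod_cast hN0
    positivity
  have hpl1 : pl < 1 := lt_trans hlh hph
  have hph0 : 0 < ph := lt_trans hpl0 hlh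
  have hA : 0 < (1-pl)^(N-1) := pow_pos (by linarith) _
  have htT' : (t:ℝ) < T := by exact_mod_cast htT
  have hT0 : (0:ℝ) < T := by
    have h1 : (0:ℕ) < T := by omega
    exact_mod_cast h1
  have hc : 0 < ((T:ℝ) - t)/T := div_pos (by linarith) hT0
  have htgt0 : 0 < tauD N pl ph - tauC N pl := by
    have h : tauD N pl ph - tauC N pl = (ph - pl)*(1-pl)^(N-1) := by
      unfold tauD tauC; ring
    rw [h]; exact mul_pos (by linarith) hA
  have gpos : ∀ k ≤ k0, 0 < tauD N pl ph * mu N t pl ph k - tauC N pl * lam N t pl k := by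
    have main : ∀ m k, k + m = k0 →
        0 < tauD N pl ph * mu N t pl ph k - tauC N pl * lam N t pl k := by
      intro m
      induction m with
      | zero =>
        intro k hk
        obtain rfl : k = k0 := by omega
        exact hk0pos
      | succ m ih =>
        intro k hk
        have h1 := ih (k+1) (by omega)
        have hk1t : k + 1 ≤ t := by omega
        rw [g_factor N t pl ph (by omega)] at h1
        have hC1 : (0:ℝ) < (t.choose (k+1) : ℝ) := by
          exact_mod_cast Nat.choose_pos hk1t
        set a := (1-pl)^(N-1)*(1-ph) with hadef
        set b := (1-pl)^(N-1)*(1-pl) with hbdef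
        have ha : 0 < a := mul_pos hA (by linarith)
        have hab : a ≤ b := mul_le_mul_of_nonneg_left (by linarith) hA.le
        have hb1 : b < 1 := by
          have hbe : b = (1-pl)^N := by rw [hbdef, ← pow_succ]; congr 1; omega
          rw [hbe]
          exact pow_lt_one₀ (by linarith) (by linarith) (by omega)
        have hd1 : 0 < ph * a^(k+1) * (1-a)^(t-(k+1)) - pl * b^(k+1) * (1-b)^(t-(k+1)) := by
          by_contra hle
          push_neg at hle
          nlinarith [mul_pos hA hC1]
        have hstep := aux_step pl ph a b k (t-(k+1)) hpl0 hph0 ha hab hb1 (by linarith)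
        have hexp : t - (k+1) + 1 = t - k := by omega
        rw [hexp] at hstep
        rw [g_factor N t pl ph (by omega)]
        have hC : (0:ℝ) < (t.choose k : ℝ) := by
          exact_mod_cast Nat.choose_pos (by omega : k ≤ t)
        have hfin := mul_pos (mul_pos hA hC)
          (show 0 < ph * a^k * (1-a)^(t-k) - pl * b^k * (1-b)^(t-k) by linarith)
        rw [← hadef, ← hbdef]
        exact hfin
    exact fun k hk => main (k0 - k) k (by omega)
  obtain ⟨kbar, hkle, hPk, hmin, h0, h1, heq⟩ :=
    abstract_main (fun k => tauD N pl ph * mu N t pl ph k - tauC N pl * lam N t pl k)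
      (((T:ℝ)-t)/T) (tauD N pl ph - tauC N pl) t k0 hc htgt0 hk0t gpos hfeasLP
  have hdc : (T:ℝ)/((T:ℝ)-t) * (tauD N pl ph - tauC N pl)
      = (tauD N pl ph - tauC N pl) / (((T:ℝ)-t)/T) := by
    rw [div_div_eq_mul_div]
    field_simp
  have hval : thresholdRule N t T pl ph kbar kbar
      = ((tauD N pl ph - tauC N pl) / (((T:ℝ)-t)/T)
          - ∑ j ∈ Finset.range kbar, (tauD N pl ph * mu N t pl ph j - tauC N pl * lam N t pl j))
        / (tauD N pl ph * mu N t pl ph kbar - tauC N pl * lam N t pl kbar) := by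
    simp only [thresholdRule, lt_self_iff_false, if_false, eq_self_iff_true, if_true]
    rw [hdc]
  have hsum : incLHS N t T pl ph (thresholdRule N t T pl ph kbar)
      = (((T:ℝ)-t)/T) *
        ((∑ j ∈ Finset.range kbar, (tauD N pl ph * mu N t pl ph j - tauC N pl * lam N t pl j))
          + (tauD N pl ph * mu N t pl ph kbar - tauC N pl * lam N t pl kbar)
            * thresholdRule N t T pl ph kbar kbar) := by
    unfold incLHS
    congr 1
    have hsub : Finset.range (kbar+1) ⊆ Finset.range (t+1) :=
      Finset.range_subset_range.mpr (by omega)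
    rw [← Finset.sum_subset hsub (by
      intro x hx hnx
      rw [Finset.mem_range] at hx hnx
      have hx1 : ¬ x < kbar := by omega
      have hx2 : x ≠ kbar := by omega
      simp [thresholdRule, hx1, hx2])]
    rw [Finset.sum_range_succ]
    congr 1
    apply Finset.sum_congr rfl
    intro j hj
    rw [Finset.mem_range] at hj
    simp [thresholdRule, hj]
  have hinceq : incLHS N t T pl ph (thresholdRule N t T pl ph kbar)
      = tauD N pl ph - tauC N pl := by
    rw [hsum, hval]
    rw [mul_comm (tauD N pl ph * mu N t pl ph kbar - tauC N pl * lam N t pl kbar)] at heq ⊢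
    exact heq
  refine ⟨kbar, hkle, hPk, hmin, ?_, ?_, hinceq, ?_, hinceq.ge⟩
  · rw [hval]; exact h0
  · rw [hval]; exact h1
  · intro k hk
    by_cases hlt : k < kbar
    · simp [thresholdRule, hlt]
    · by_cases heqk : k = kbar
      · subst heqk
        exact ⟨by rw [hval]; exact h0, by rw [hval]; exact h1⟩
      · simp [thresholdRule, hlt, heqk]
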